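/- Let p>0, α∈(0,2), σ>0, n>0, and let Q̃ be a Borel probability measure on (0,∞). Then for every x>0, the truncated series representation has jump-size intensity ∫_{(0,∞)} ∫_0^∞ ∫_0^1 ∫_0^n 𝟙{ min( (αs/σ)^{−1/α} , r^{1/p} u^{1/α} v^{−1/p} ) > x } ds · du · e^{−r} dr · dQ̃(v) = min( n α x^{α}/σ , 1 ) · σ ∫_x^∞ q(r^p) r^{−α−1} dr; that is, the truncated Lévy measure satisfies M_n((x,∞)) = min(nαx^α/σ, 1) · M((x,∞)). -/

import Mathlib

open MeasureTheory

open Set Real Filter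

lemma sInt {α σ n x : ℝ} (hα : 0 < α) (hσ : 0 < σ) (hn : 0 < n) (hx : 0 < x) (C : ℝ) :
    (∫ s in Set.Ioo (0:ℝ) n, if x < min ((α * s / σ) ^ (-1 / α)) C then (1:ℝ) else 0)
      = min n (σ * x ^ (-α) / α) * (if x < C then 1 else 0) := by
  set c := σ * x ^ (-α) / α with hc
  have hc0 : 0 < c := by
    have := Real.rpow_pos_of_pos hx (-α); positivity
  by_cases hC : x < C
  · have key : ∀ s ∈ Set.Ioo (0:ℝ) n,
        (if x < min ((α * s / σ) ^ (-1 / α)) C then (1:ℝ) else 0)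
          = Set.indicator (Set.Iio c) (fun _ => (1:ℝ)) s := by
      intro s hs
      have hs0 : 0 < s := hs.1
      have ht : 0 < α * s / σ := by positivity
      have hiff : x < (α * s / σ) ^ (-1 / α) ↔ s < c := by
        have h1 : (-1) / α = (-α)⁻¹ := by field_simp
        rw [h1, Real.lt_rpow_inv_iff_of_neg hx ht (by linarith : -α < 0)]
        rw [hc, lt_div_iff₀ hα, div_lt_iff₀ hσ]
        constructor <;> intro h <;> nlinarith
      by_cases h2 : s < c
      · simp [lt_min_iff, hiff.mpr h2, hC, Set.indicator_of_mem (Set.mem_Iio.mpr h2)]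
      · simp [lt_min_iff, hiff, h2, Set.indicator_of_notMem (by simpa using h2 : s ∉ Set.Iio c)]
    rw [setIntegral_congr_fun measurableSet_Ioo key,
      setIntegral_indicator measurableSet_Iio, Set.Ioo_inter_Iio, setIntegral_const,
      Real.volume_real_Ioo, smul_eq_mul, mul_one, if_pos hC, mul_one]
    rw [sub_zero, max_eq_left (le_of_lt (lt_min hn hc0))]
  · rw [if_neg hC, mul_zero]
    simp only [lt_min_iff, hC, and_false, if_false]
    simp

lemma uInt {p α x : ℝ} (hp : 0 < p) (hα : 0 < α) (hx : 0 < x) {r v : ℝ} (hr : 0 < r) (hv : 0 < v) :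
    (∫ u in Set.Ioo (0:ℝ) 1, if x < r ^ (1 / p) * u ^ (1 / α) * v ^ (-1 / p) then (1:ℝ) else 0)
      = max (1 - (x * v ^ (1 / p) / r ^ (1 / p)) ^ α) 0 := by
  set b := (x * v ^ (1 / p) / r ^ (1 / p)) ^ α with hb
  have hrp : (0:ℝ) < r ^ (1 / p) := Real.rpow_pos_of_pos hr _
  have hvp : (0:ℝ) < v ^ (1 / p) := Real.rpow_pos_of_pos hv _
  have hb0 : 0 < b := by positivity
  have key : ∀ u ∈ Set.Ioo (0:ℝ) 1,
      (if x < r ^ (1 / p) * u ^ (1 / α) * v ^ (-1 / p) then (1:ℝ) else 0)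
        = Set.indicator (Set.Ioi b) (fun _ => (1:ℝ)) u := by
    intro u hu
    have hu0 : 0 < u := hu.1
    have hvn : v ^ (-1 / p) = (v ^ (1 / p))⁻¹ := by
      rw [← Real.rpow_neg hv.le]; ring_nf
    have hiff : x < r ^ (1 / p) * u ^ (1 / α) * v ^ (-1 / p) ↔ b < u := by
      rw [hvn]
      have h1 : r ^ (1 / p) * u ^ (1 / α) * (v ^ (1 / p))⁻¹
          = u ^ (1 / α) * (r ^ (1 / p) / v ^ (1 / p)) := by ring
      rw [h1, ← div_lt_iff₀ (by positivity)]
      have h2 : x / (r ^ (1 / p) / v ^ (1 / p)) = x * v ^ (1 / p) / r ^ (1 / p) := by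
        field_simp
      rw [h2, show (1:ℝ)/α = α⁻¹ from one_div α, Real.lt_rpow_inv_iff_of_pos (by positivity) hu0.le hα, ← hb]
    by_cases h2 : b < u
    · rw [if_pos (hiff.mpr h2), Set.indicator_of_mem (Set.mem_Ioi.mpr h2)]
    · rw [if_neg (fun h => h2 (hiff.mp h)),
        Set.indicator_of_notMem (by simpa using h2 : u ∉ Set.Ioi b)]
  rw [setIntegral_congr_fun measurableSet_Ioo key,
    setIntegral_indicator measurableSet_Ioi, Set.Ioo_inter_Ioi, setIntegral_const,
    Real.volume_real_Ioo, smul_eq_mul, mul_one, max_eq_right hb0.le]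

lemma expTend {p v : ℝ} (hp : 0 < p) (hv : 0 < v) :
    Filter.Tendsto (fun s : ℝ => Real.exp (-(s ^ p) * v)) Filter.atTop (nhds 0) := by
  have h1 : Filter.Tendsto (fun s : ℝ => -(s ^ p) * v) Filter.atTop Filter.atBot := by
    have h2 := tendsto_neg_atTop_atBot.comp ((tendsto_rpow_atTop hp).atTop_mul_const hv)
    refine h2.congr fun s => ?_
    simp [Function.comp, neg_mul]
  exact Real.tendsto_exp_atBot.comp h1

lemma expDeriv {p v : ℝ} (s : ℝ) (hs : s ≠ 0) :
    HasDerivAt (fun s : ℝ => Real.exp (-(s ^ p) * v))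
      (-(p * s ^ (p - 1) * v) * Real.exp (-(s ^ p) * v)) s := by
  have h1 : HasDerivAt (fun s : ℝ => -(s ^ p) * v) (-(p * s ^ (p - 1) * v)) s := by
    simpa [neg_mul, Pi.neg_def] using ((hasDerivAt_rpow_const (p := p) (Or.inl hs)).mul_const v).neg
  simpa [mul_comm] using h1.exp

lemma intA {p v α x : ℝ} (hp : 0 < p) (hv : 0 < v) (hα : 0 < α) (hx : 0 < x) :
    IntegrableOn (fun s : ℝ => Real.exp (-(s ^ p) * v) * s ^ (-α - 1)) (Set.Ioi x) := by
  refine (integrableOn_Ioi_rpow_of_lt (by linarith : -α - 1 < -1) hx).mono' ?_ ?_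
  · exact (Measurable.aestronglyMeasurable (by fun_prop))
  · filter_upwards [ae_restrict_mem measurableSet_Ioi] with s hs
    have hs0 : 0 < s := lt_trans hx hs
    have h1 : Real.exp (-(s ^ p) * v) ≤ 1 := by
      rw [Real.exp_le_one_iff]
      have : 0 ≤ s ^ p := (Real.rpow_pos_of_pos hs0 p).le
      nlinarith
    have h2 : (0:ℝ) < s ^ (-α - 1) := Real.rpow_pos_of_pos hs0 _
    rw [norm_mul, norm_of_nonneg (Real.exp_pos _).le, norm_of_nonneg h2.le]
    nlinarith [Real.exp_pos (-(s ^ p) * v)]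

lemma intB {p v x : ℝ} (hp : 0 < p) (hv : 0 < v) (hx : 0 < x) :
    IntegrableOn (fun s : ℝ => p * s ^ (p - 1) * Real.exp (-(s ^ p) * v)) (Set.Ioi x) := by
  have key : IntegrableOn (fun s : ℝ => p * s ^ (p - 1) * v * Real.exp (-(s ^ p) * v))
      (Set.Ioi x) := by
    refine integrableOn_Ioi_deriv_of_nonneg (g := fun s => -Real.exp (-(s ^ p) * v))
      (l := 0) ?_ (fun s hs => ?_) (fun s hs => ?_) ?_
    · exact ((expDeriv x hx.ne').continuousAt.neg).continuousWithinAt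
    · have := (expDeriv (p := p) (v := v) s (lt_trans hx hs).ne').neg
      simpa [neg_mul, Pi.neg_def] using this
    · have hs0 : 0 < s := lt_trans hx hs
      have := (Real.rpow_pos_of_pos hs0 (p - 1)).le
      positivity
    · simpa using (expTend hp hv).neg
  have h3 : IntegrableOn (fun s : ℝ => v⁻¹ * (p * s ^ (p - 1) * v * Real.exp (-(s ^ p) * v)))
      (Set.Ioi x) := key.const_mul v⁻¹
  refine h3.congr_fun (fun s _ => ?_) measurableSet_Ioi
  field_simp


lemma xas_le_one {a x : ℝ} (ha : 0 < a) (hx : 0 < x) {s : ℝ} (hs : x < s) :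
    x ^ a * s ^ (-a) ≤ 1 := by
  have hs0 : 0 < s := lt_trans hx hs
  have h2 : s ^ (-a) ≤ x ^ (-a) :=
    (Real.rpow_le_rpow_iff_of_neg hs0 hx (by linarith : -a < 0)).mpr hs.le
  have h3 : x ^ a * x ^ (-a) = 1 := by
    rw [← Real.rpow_add hx]; simp
  nlinarith [Real.rpow_pos_of_pos hx a, Real.rpow_pos_of_pos hs0 (-a),
    Real.rpow_pos_of_pos hx (-a)]

lemma intF2 {p v a x : ℝ} (hp : 0 < p) (hv : 0 < v) (ha : 0 < a) (hx : 0 < x) :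
    IntegrableOn (fun s : ℝ =>
      v * (p * s ^ (p - 1) * (1 - x ^ a * s ^ (-a)) * Real.exp (-(s ^ p) * v)))
      (Set.Ioi x) := by
  have key : IntegrableOn (fun s : ℝ => v * (p * s ^ (p - 1) * Real.exp (-(s ^ p) * v)))
      (Set.Ioi x) := (intB hp hv hx).const_mul v
  refine key.mono' (Measurable.aestronglyMeasurable (by fun_prop)) ?_
  filter_upwards [ae_restrict_mem measurableSet_Ioi] with s hs
  have hs0 : 0 < s := lt_trans hx hs
  have h1 := xas_le_one ha hx hs
  have h4 : (0:ℝ) < s ^ (p - 1) := Real.rpow_pos_of_pos hs0 _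
  have h5 := Real.exp_pos (-(s ^ p) * v)
  have h6 : (0:ℝ) < x ^ a * s ^ (-a) := by
    have := Real.rpow_pos_of_pos hx a
    have := Real.rpow_pos_of_pos hs0 (-a)
    positivity
  have h7 : 0 ≤ 1 - x ^ a * s ^ (-a) := by linarith
  have h8 : (0:ℝ) ≤ v * (p * s ^ (p - 1) * (1 - x ^ a * s ^ (-a)) * Real.exp (-(s ^ p) * v)) :=
    mul_nonneg hv.le (mul_nonneg (mul_nonneg (by positivity) h7) h5.le)
  rw [Real.norm_of_nonneg h8]
  have h9 : (0:ℝ) ≤ v * (p * s ^ (p - 1)) * Real.exp (-(s ^ p) * v) * (x ^ a * s ^ (-a)) := by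
    positivity
  nlinarith [h9]

lemma intG {p v a x : ℝ} (hp : 0 < p) (hv : 0 < v) (ha : 0 < a) (hx : 0 < x) :
    IntegrableOn (fun s : ℝ => a * x ^ a * (Real.exp (-(s ^ p) * v) * s ^ (-a - 1)))
      (Set.Ioi x) := (intA hp hv ha hx).const_mul _

lemma ibp {p v a x : ℝ} (hp : 0 < p) (hv : 0 < v) (ha : 0 < a) (hx : 0 < x) :
    v * ∫ s in Set.Ioi x, p * s ^ (p - 1) * (1 - x ^ a * s ^ (-a)) * Real.exp (-(s ^ p) * v)
      = a * x ^ a * ∫ s in Set.Ioi x, Real.exp (-(s ^ p) * v) * s ^ (-a - 1) := by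
  set F : ℝ → ℝ := fun s => (x ^ a * s ^ (-a) - 1) * Real.exp (-(s ^ p) * v) with hF
  have hFderiv : ∀ s : ℝ, 0 < s → HasDerivAt F
      (v * (p * s ^ (p - 1) * (1 - x ^ a * s ^ (-a)) * Real.exp (-(s ^ p) * v))
        - a * x ^ a * (Real.exp (-(s ^ p) * v) * s ^ (-a - 1))) s := by
    intro s hs0
    have h1 : HasDerivAt (fun s : ℝ => x ^ a * s ^ (-a) - 1)
        (x ^ a * (-a * s ^ (-a - 1))) s :=
      (((hasDerivAt_rpow_const (p := -a) (Or.inl hs0.ne')).const_mul (x ^ a)).sub_const 1)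
    have h2 := h1.mul (expDeriv (p := p) (v := v) s hs0.ne')
    refine h2.congr_deriv ?_
    ring
  have hF0 : F x = 0 := by
    have h0 : x ^ a * x ^ (-a) = 1 := by rw [← Real.rpow_add hx]; simp
    simp [hF, h0]
  have hFtend : Filter.Tendsto F Filter.atTop (nhds 0) := by
    have h3 := (((tendsto_rpow_neg_atTop ha).const_mul (x ^ a)).sub_const 1).mul
      (expTend hp hv)
    have h4 : (x ^ a * 0 - 1) * 0 = 0 := by ring
    rw [h4] at h3
    exact h3
  have hint : IntegrableOn (fun s : ℝ =>
      v * (p * s ^ (p - 1) * (1 - x ^ a * s ^ (-a)) * Real.exp (-(s ^ p) * v))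
        - a * x ^ a * (Real.exp (-(s ^ p) * v) * s ^ (-a - 1))) (Set.Ioi x) :=
    (intF2 hp hv ha hx).sub (intG hp hv ha hx)
  have key := integral_Ioi_of_hasDerivAt_of_tendsto
    (f := F) (a := x)
    ((hFderiv x hx).continuousAt.continuousWithinAt)
    (fun s hs => hFderiv s (lt_trans hx hs)) hint hFtend
  rw [hF0, sub_zero] at key
  rw [integral_sub (intF2 hp hv ha hx) (intG hp hv ha hx), sub_eq_zero] at key
  rw [← integral_const_mul, ← integral_const_mul]
  exact key


lemma rInt {p v a x : ℝ} (hp : 0 < p) (hv : 0 < v) (ha : 0 < a) (hx : 0 < x) :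
    (∫ r in Set.Ioi (0:ℝ), max (1 - (x * v ^ (1 / p) / r ^ (1 / p)) ^ a) 0 * Real.exp (-r))
      = a * x ^ a * ∫ s in Set.Ioi x, Real.exp (-(s ^ p) * v) * s ^ (-a - 1) := by
  set G : ℝ → ℝ := fun r => max (1 - (x * v ^ (1 / p) / r ^ (1 / p)) ^ a) 0 * Real.exp (-r)
    with hG
  set f : ℝ → ℝ := fun s => p * s ^ (p - 1) * (1 - x ^ a * s ^ (-a)) * Real.exp (-(s ^ p) * v)
    with hf
  have h1 : (∫ r in Set.Ioi (0:ℝ), G r) = v * ∫ s in Set.Ioi (0:ℝ), G (v * s) := by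
    rw [integral_comp_mul_left_Ioi G 0 hv, mul_zero, smul_eq_mul, ← mul_assoc,
      mul_inv_cancel₀ hv.ne', one_mul]
  have h2 := integral_comp_rpow_Ioi_of_pos (g := fun t => G (v * t)) hp
  have hkey : ∀ s ∈ Set.Ioi (0:ℝ), (p * s ^ (p - 1)) • G (v * s ^ p)
      = Set.indicator (Set.Ioi x) f s := by
    intro s hs
    have hs0 : 0 < s := hs
    have hvp : (0:ℝ) < v ^ (1 / p) := Real.rpow_pos_of_pos hv _
    have hvsp : (v * s ^ p) ^ (1 / p) = v ^ (1 / p) * s := by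
      rw [Real.mul_rpow hv.le (Real.rpow_nonneg hs0.le p), ← Real.rpow_mul hs0.le,
        mul_one_div_cancel hp.ne', Real.rpow_one]
    have hfrac : x * v ^ (1 / p) / (v * s ^ p) ^ (1 / p) = x / s := by
      rw [hvsp]
      field_simp
    have hxs : (x / s) ^ a = x ^ a * s ^ (-a) := by
      rw [Real.div_rpow hx.le hs0.le, Real.rpow_neg hs0.le, div_eq_mul_inv]
    have hexp : -(v * s ^ p) = -(s ^ p) * v := by ring
    by_cases hsx : x < s
    · have hle := xas_le_one ha hx hsx
      rw [Set.indicator_of_mem (Set.mem_Ioi.mpr hsx), hG]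
      simp only
      rw [hfrac, hxs, hexp, max_eq_left (by linarith), smul_eq_mul, hf]
      ring
    · rw [Set.indicator_of_notMem (by simpa using hsx : s ∉ Set.Ioi x), hG]
      simp only
      rw [hfrac, hxs]
      have hb1 : (1:ℝ) ≤ x ^ a * s ^ (-a) := by
        have hsx' : s ≤ x := not_lt.mp hsx
        have h2' : x ^ (-a) ≤ s ^ (-a) :=
          (Real.rpow_le_rpow_iff_of_neg hx hs0 (by linarith : -a < 0)).mpr hsx'
        have h3 : x ^ a * x ^ (-a) = 1 := by rw [← Real.rpow_add hx]; simp
        nlinarith [Real.rpow_pos_of_pos hx a]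
      rw [max_eq_right (by linarith), zero_mul, smul_eq_mul, mul_zero]
  have h3 : (∫ s in Set.Ioi (0:ℝ), (p * s ^ (p - 1)) • G (v * s ^ p))
      = ∫ s in Set.Ioi x, f s := by
    rw [setIntegral_congr_fun measurableSet_Ioi hkey,
      setIntegral_indicator measurableSet_Ioi, Set.Ioi_inter_Ioi, max_eq_right hx.le]
  rw [h1, ← h2, h3, hf]
  exact ibp hp hv ha hx

lemma qpos {Q : Measure ℝ} (hQ : Q (Set.Iic 0) = 0) : ∀ᵐ w ∂Q, 0 < w := by
  rw [ae_iff]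
  refine measure_mono_null ?_ hQ
  intro w hw
  simpa using hw

lemma fub {p a x : ℝ} (hp : 0 < p) (ha : 0 < a) (hx : 0 < x)
    (Q : Measure ℝ) [IsProbabilityMeasure Q] (hQ : Q (Set.Iic 0) = 0) :
    (∫ v, (∫ s in Set.Ioi x, Real.exp (-(s ^ p) * v) * s ^ (-a - 1)) ∂Q)
      = ∫ s in Set.Ioi x, (∫ w, Real.exp (-(s ^ p) * w) ∂Q) * s ^ (-a - 1) := by
  set f : ℝ → ℝ → ℝ :=
    fun w s => (if 0 < w then Real.exp (-(s ^ p) * w) else 0) * s ^ (-a - 1) with hfdef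
  have hae := qpos hQ
  have hmeas : Measurable (Function.uncurry f) := by
    have h1 : Measurable fun q : ℝ × ℝ => Real.exp (-(q.2 ^ p) * q.1) := by fun_prop
    exact ((Measurable.ite (measurableSet_lt measurable_const measurable_fst) h1
      measurable_const).mul (by fun_prop))
  have hCst : IntegrableOn (fun s : ℝ => s ^ (-a - 1)) (Set.Ioi x) :=
    integrableOn_Ioi_rpow_of_lt (by linarith) hx
  have hbnd : ∀ w s, s ∈ Set.Ioi x → ‖f w s‖ ≤ s ^ (-a - 1) := by
    intro w s hs
    have hs0 : 0 < s := lt_trans hx hs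
    have h2 : (0:ℝ) < s ^ (-a - 1) := Real.rpow_pos_of_pos hs0 _
    by_cases hw : 0 < w
    · have h1 : Real.exp (-(s ^ p) * w) ≤ 1 := by
        rw [Real.exp_le_one_iff]
        have h3 : (0:ℝ) ≤ s ^ p := (Real.rpow_pos_of_pos hs0 p).le
        nlinarith
      rw [hfdef]
      simp only [if_pos hw]
      rw [norm_mul, Real.norm_of_nonneg (Real.exp_pos _).le, Real.norm_of_nonneg h2.le]
      nlinarith [Real.exp_pos (-(s ^ p) * w)]
    · rw [hfdef]
      simp only [if_neg hw, zero_mul, norm_zero]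
      exact h2.le
  have hint : Integrable (Function.uncurry f) (Q.prod (volume.restrict (Set.Ioi x))) := by
    rw [integrable_prod_iff hmeas.aestronglyMeasurable]
    constructor
    · refine Filter.Eventually.of_forall (fun w => ?_)
      refine hCst.mono' (Measurable.aestronglyMeasurable
        (hmeas.comp measurable_prodMk_left)) ?_
      filter_upwards [ae_restrict_mem measurableSet_Ioi] with s hs
      exact hbnd w s hs
    · have hb2 : ∀ w : ℝ, ‖∫ s in Set.Ioi x, ‖f w s‖‖ ≤ ∫ s in Set.Ioi x, s ^ (-a - 1) := by
        intro w
        rw [Real.norm_of_nonneg (integral_nonneg fun s => norm_nonneg _)]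
        refine integral_mono_of_nonneg (Filter.Eventually.of_forall fun s => norm_nonneg _)
          hCst ?_
        filter_upwards [ae_restrict_mem measurableSet_Ioi] with s hs
        exact hbnd w s hs
      refine (integrable_const (∫ s in Set.Ioi x, s ^ (-a - 1))).mono' ?_
        (Filter.Eventually.of_forall hb2)
      exact (hmeas.norm.aestronglyMeasurable).integral_prod_right'
  have hswap := integral_integral_swap (f := f) hint
  have hL : (∫ v, (∫ s in Set.Ioi x, Real.exp (-(s ^ p) * v) * s ^ (-a - 1)) ∂Q)
      = ∫ w, (∫ s in Set.Ioi x, f w s) ∂Q := by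
    refine integral_congr_ae ?_
    filter_upwards [hae] with w hw
    refine setIntegral_congr_fun measurableSet_Ioi (fun s _ => ?_)
    rw [hfdef]
    simp only [if_pos hw]
  have hR : (∫ s in Set.Ioi x, (∫ w, f w s ∂Q))
      = ∫ s in Set.Ioi x, (∫ w, Real.exp (-(s ^ p) * w) ∂Q) * s ^ (-a - 1) := by
    refine setIntegral_congr_fun measurableSet_Ioi (fun s _ => ?_)
    rw [hfdef]
    simp only
    rw [integral_mul_const]
    congr 1
    refine integral_congr_ae ?_
    filter_upwards [hae] with w hw
    rw [if_pos hw]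
  rw [hL, hswap, hR]


lemma inner_eq {p α σ n x v : ℝ} (hp : 0 < p) (hα : 0 < α) (hσ : 0 < σ) (hn : 0 < n)
    (hx : 0 < x) (hv : 0 < v) :
    (∫ r in Set.Ioi (0:ℝ),
        (∫ u in Set.Ioo (0:ℝ) 1,
          ∫ s in Set.Ioo (0:ℝ) n,
            if x < min ((α * s / σ) ^ (-1 / α)) (r ^ (1 / p) * u ^ (1 / α) * v ^ (-1 / p))
            then (1:ℝ) else 0) * Real.exp (-r))
      = min n (σ * x ^ (-α) / α)
          * (α * x ^ α * ∫ s in Set.Ioi x, Real.exp (-(s ^ p) * v) * s ^ (-α - 1)) := by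
  have hst : ∀ r ∈ Set.Ioi (0:ℝ),
      (∫ u in Set.Ioo (0:ℝ) 1,
          ∫ s in Set.Ioo (0:ℝ) n,
            if x < min ((α * s / σ) ^ (-1 / α)) (r ^ (1 / p) * u ^ (1 / α) * v ^ (-1 / p))
            then (1:ℝ) else 0) * Real.exp (-r)
        = min n (σ * x ^ (-α) / α)
            * (max (1 - (x * v ^ (1 / p) / r ^ (1 / p)) ^ α) 0 * Real.exp (-r)) := by
    intro r hr
    have e1 : (∫ u in Set.Ioo (0:ℝ) 1,
          ∫ s in Set.Ioo (0:ℝ) n,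
            if x < min ((α * s / σ) ^ (-1 / α)) (r ^ (1 / p) * u ^ (1 / α) * v ^ (-1 / p))
            then (1:ℝ) else 0)
        = ∫ u in Set.Ioo (0:ℝ) 1, min n (σ * x ^ (-α) / α)
            * (if x < r ^ (1 / p) * u ^ (1 / α) * v ^ (-1 / p) then (1:ℝ) else 0) := by
      refine setIntegral_congr_fun measurableSet_Ioo (fun u _ => ?_)
      exact sInt hα hσ hn hx _
    rw [e1, integral_const_mul, uInt hp hα hx hr hv]
    ring
  rw [setIntegral_congr_fun measurableSet_Ioi hst, integral_const_mul, rInt hp hv hα hx]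


/-- Truncated jump-size intensity of the series representation: for
`p>0`, `α ∈ (0,2)`, `σ>0`, `n>0`, a Borel probability measure `Q̃` on `(0,∞)`, and `x>0`,
`∫_{(0,∞)} ∫_0^∞ ∫_0^1 ∫_0^n 𝟙{min((αs/σ)^{−1/α}, r^{1/p} u^{1/α} v^{−1/p}) > x} ds du
  e^{−r} dr dQ̃(v) = min(nαx^α/σ, 1) · σ ∫_x^∞ q(r^p) r^{−α−1} dr`,
where `q(x) = ∫ e^{−xw} dQ̃(w)`; i.e. `M_n((x,∞)) = min(nαx^α/σ, 1) · M((x,∞))`. -/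
theorem truncated_series_intensity (p α σ n x : ℝ) (hp : 0 < p) (hα : α ∈ Set.Ioo (0:ℝ) 2)
    (hσ : 0 < σ) (hn : 0 < n) (hx : 0 < x)
    (Q : Measure ℝ) [IsProbabilityMeasure Q] (hQ : Q (Set.Iic 0) = 0) :
    (∫ v, (∫ r in Set.Ioi (0:ℝ),
        (∫ u in Set.Ioo (0:ℝ) 1,
          ∫ s in Set.Ioo (0:ℝ) n,
            if x < min ((α * s / σ) ^ (-1 / α)) (r ^ (1 / p) * u ^ (1 / α) * v ^ (-1 / p))
            then (1:ℝ) else 0) * Real.exp (-r)) ∂Q) =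
      min (n * α * x ^ α / σ) 1 *
        (σ * ∫ r in Set.Ioi x, (∫ w, Real.exp (-(r ^ p) * w) ∂Q) * r ^ (-α - 1)) := by
  have hα1 : 0 < α := hα.1
  have hxa : (0:ℝ) < x ^ α := Real.rpow_pos_of_pos hx α
  have hxna : (0:ℝ) < x ^ (-α) := Real.rpow_pos_of_pos hx (-α)
  have hxx : x ^ (-α) * x ^ α = 1 := by rw [← Real.rpow_add hx]; simp
  have hKc : min n (σ * x ^ (-α) / α) * α * x ^ α = min (n * α * x ^ α / σ) 1 * σ := by
    rw [mul_assoc, min_mul_of_nonneg _ _ (by positivity : (0:ℝ) ≤ α * x ^ α),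
      min_mul_of_nonneg _ _ hσ.le]
    congr 1
    · rw [div_mul_cancel₀ _ hσ.ne']
      ring
    · rw [one_mul]
      have h5 : σ * x ^ (-α) / α * (α * x ^ α) = σ * (x ^ (-α) * x ^ α) * (α / α) := by ring
      rw [h5, hxx, div_self hα1.ne', mul_one, mul_one]
  have h1 : (∫ v, (∫ r in Set.Ioi (0:ℝ),
        (∫ u in Set.Ioo (0:ℝ) 1,
          ∫ s in Set.Ioo (0:ℝ) n,
            if x < min ((α * s / σ) ^ (-1 / α)) (r ^ (1 / p) * u ^ (1 / α) * v ^ (-1 / p))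
            then (1:ℝ) else 0) * Real.exp (-r)) ∂Q)
      = ∫ v, min n (σ * x ^ (-α) / α)
          * (α * x ^ α * ∫ s in Set.Ioi x, Real.exp (-(s ^ p) * v) * s ^ (-α - 1)) ∂Q := by
    refine integral_congr_ae ?_
    filter_upwards [qpos hQ] with v hv
    exact inner_eq hp hα1 hσ hn hx hv
  rw [h1]
  simp only [← mul_assoc]
  rw [integral_const_mul, fub hp hα1 hx Q hQ, hKc, mul_assoc]
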